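/- Let D be a division ring, let n be a natural number, and let K be an infinite subfield of D such that the dimension of D as a left K-vector space is at least n + 1 (possibly infinite). Then there exist left K-subspaces H_0, …, H_n of D such that for every j ≤ n the additive subgroup ⋂_{i≤n} H_i has infinite index in ⋂_{i≠j} H_i. -/

import Mathlib

/-- Let D be a division ring, n a natural number, and K an infinite (commutative) subfield of D
such that the dimension of D as a left K-vector space is at least n + 1. Then there exist left
K-subspaces H_0, …, H_n of D such that for every j ≤ n the additive subgroup ⋂_{i≤n} H_i has
infinite index in ⋂_{i≠j} H_i. -/
theorem stmt_12 (D : Type*) [DivisionRing D] (n : ℕ) (K : Subfield D)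
    (hcomm : ∀ x ∈ K, ∀ y ∈ K, x * y = y * x)
    (hKinf : (K : Set D).Infinite)
    (hdim : (n + 1 : Cardinal) ≤ Module.rank K D) :
    ∃ H : Fin (n + 1) → Submodule K D,
      ∀ j : Fin (n + 1),
        ((⨅ i, (H i).toAddSubgroup).addSubgroupOf
          (⨅ i ∈ ({j}ᶜ : Set (Fin (n + 1))), (H i).toAddSubgroup)).index = 0 := by
  classical
  obtain ⟨s, hcard, hind⟩ :=
    (le_rank_iff_exists_linearIndependent_finset (n := n + 1)).mp (by exact_mod_cast hdim)
  replace hind : LinearIndepOn K id (s : Set D) := hind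
  have hsub : (↑s : Set D) ⊆ hind.extend (Set.subset_univ _) :=
    hind.subset_extend (Set.subset_univ _)
  set B := Module.Basis.extend hind with hB
  let e : Fin (n + 1) ≃ {x // x ∈ s} := (s.equivFin.trans (finCongr hcard)).symm
  let emb : Fin (n + 1) → ↑(hind.extend (Set.subset_univ _)) :=
    fun i => ⟨(e i : D), hsub (e i).2⟩
  have hemb : Function.Injective emb := by
    intro a b hab
    have h2 : (e a : D) = (e b : D) := by
      simpa [emb, Subtype.ext_iff] using hab
    exact e.injective (Subtype.ext h2)
  have hBe : ∀ i, B (emb i) = (e i : D) := fun i => Module.Basis.extend_apply_self hind (emb i)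
  let f : Fin (n + 1) → (D →ₗ[K] K) := fun i => B.coord (emb i)
  have hfv : ∀ i j : Fin (n + 1), f i ((e j : D)) = if emb j = emb i then 1 else 0 := by
    intro i j
    simp only [f, Module.Basis.coord_apply, ← hBe j, Module.Basis.repr_self, Finsupp.single_apply]
  refine ⟨fun i => LinearMap.ker (f i), fun j => ?_⟩
  set A := (⨅ i, (LinearMap.ker (f i)).toAddSubgroup)
  set Bg := (⨅ i ∈ ({j}ᶜ : Set (Fin (n + 1))), (LinearMap.ker (f i)).toAddSubgroup)
  have hmem : ∀ c : K, (c : K) • (e j : D) ∈ Bg := by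
    intro c
    simp only [Bg, AddSubgroup.mem_iInf, Set.mem_compl_iff, Set.mem_singleton_iff]
    intro i hij
    rw [Submodule.mem_toAddSubgroup, LinearMap.mem_ker, map_smul, hfv i j,
      if_neg (fun h => hij (hemb h).symm), smul_zero]
  let g : K → (↥Bg ⧸ A.addSubgroupOf Bg) :=
    fun c => QuotientAddGroup.mk ⟨c • (e j : D), hmem c⟩
  have hginj : Function.Injective g := by
    intro c c' hcc
    have := (QuotientAddGroup.eq_iff_sub_mem).mp hcc
    rw [AddSubgroup.mem_addSubgroupOf] at this
    have hsub' : (c • (e j : D)) - (c' • (e j : D)) ∈ A := this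
    rw [← sub_smul] at hsub'
    have hA := (AddSubgroup.mem_iInf).mp hsub' j
    rw [Submodule.mem_toAddSubgroup, LinearMap.mem_ker, map_smul, hfv j j, if_pos rfl,
      smul_eq_mul, mul_one] at hA
    exact sub_eq_zero.mp hA
  have : Infinite K := by
    have := Set.infinite_coe_iff.mpr hKinf
    exact this
  have : Infinite (↥Bg ⧸ A.addSubgroupOf Bg) := Infinite.of_injective g hginj
  exact Nat.card_eq_zero_of_infinite
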